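/- Let X be a finite set with |X| = ℓ ≥ 2 and let 𝒳 = {R ⊆ X × X : dom(R) ∩ rg(R) = ∅}. Then DD(𝒳) = CD(𝒳) = 2^ℓ − 2 and DDd(𝒳) = 1. -/

import Mathlib

open Set

/-- A family of sets is convex if it is closed under set-theoretic betweenness. -/
def IsConvexFam {X : Type*} (𝒜 : Set (Set X)) : Prop :=
  ∀ S ∈ 𝒜, ∀ T ∈ 𝒜, ∀ C : Set X, S ⊆ C → C ⊆ T → C ∈ 𝒜

/-- A family is dominated if its union belongs to it. -/
def IsDominatedFam {X : Type*} (𝒜 : Set (Set X)) : Prop := ⋃₀ 𝒜 ∈ 𝒜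

/-- A family is supported if it is nonempty and its intersection belongs to it. -/
def IsSupportedFam {X : Type*} (𝒜 : Set (Set X)) : Prop := 𝒜.Nonempty ∧ ⋂₀ 𝒜 ∈ 𝒜

/-- A family is an interval if it equals `[A,B] = {C | A ⊆ C ⊆ B}` for some `A ⊆ B`. -/
def IsIntervalFam {X : Type*} (𝒜 : Set (Set X)) : Prop :=
  ∃ A B : Set X, A ⊆ B ∧ 𝒜 = Set.Icc A B

/-- `𝒢` dominates `𝒜` if there are dominated convex families `𝒟 G ⊆ 𝒜` (`G ∈ 𝒢`)
with `⋃ G ∈ 𝒢, 𝒟 G = 𝒜` and `⋃₀ (𝒟 G) = G`. -/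
def DominatesFam {X : Type*} (𝒢 𝒜 : Set (Set X)) : Prop :=
  𝒢 ⊆ 𝒜 ∧ ∃ 𝒟 : Set X → Set (Set X),
    (∀ G ∈ 𝒢, 𝒟 G ⊆ 𝒜 ∧ IsConvexFam (𝒟 G) ∧ IsDominatedFam (𝒟 G) ∧ ⋃₀ (𝒟 G) = G) ∧
    (⋃ G ∈ 𝒢, 𝒟 G) = 𝒜

/-- `𝒦` supports `𝒜` if there are supported convex families `𝒮 K ⊆ 𝒜` (`K ∈ 𝒦`)
with `⋃ K ∈ 𝒦, 𝒮 K = 𝒜` and `⋂₀ (𝒮 K) = K`. -/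
def SupportsFam {X : Type*} (𝒦 𝒜 : Set (Set X)) : Prop :=
  𝒦 ⊆ 𝒜 ∧ ∃ 𝒮 : Set X → Set (Set X),
    (∀ K ∈ 𝒦, 𝒮 K ⊆ 𝒜 ∧ IsConvexFam (𝒮 K) ∧ IsSupportedFam (𝒮 K) ∧ ⋂₀ (𝒮 K) = K) ∧
    (⋃ K ∈ 𝒦, 𝒮 K) = 𝒜

/-- The upper dimension: the minimal cardinality of a dominating subfamily. -/
noncomputable def upperDim {X : Type*} (𝒜 : Set (Set X)) : ℕ∞ :=
  sInf {n : ℕ∞ | ∃ 𝒢 : Set (Set X), DominatesFam 𝒢 𝒜 ∧ 𝒢.encard = n}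

/-- The dual upper dimension: the minimal cardinality of a supporting subfamily. -/
noncomputable def dualDim {X : Type*} (𝒜 : Set (Set X)) : ℕ∞ :=
  sInf {n : ℕ∞ | ∃ 𝒦 : Set (Set X), SupportsFam 𝒦 𝒜 ∧ 𝒦.encard = n}

/-- The cylindrical dimension: the minimal number of intervals whose union is `𝒜`. -/
noncomputable def cylDim {X : Type*} (𝒜 : Set (Set X)) : ℕ∞ :=
  sInf {n : ℕ∞ | ∃ 𝕀 : Set (Set (Set X)),
    (∀ J ∈ 𝕀, IsIntervalFam J) ∧ ⋃₀ 𝕀 = 𝒜 ∧ 𝕀.encard = n}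

open Classical in
noncomputable def chiFun {X : Type*} (A : Set X) (x : X) : Bool := decide (x ∈ A)

/-- The set-theoretic operation corresponding to a binary operation on `{0,1}`. -/
noncomputable def setOp {X : Type*} (op : Bool → Bool → Bool) (A B : Set X) : Set X :=
  {x | op (chiFun A x) (chiFun B x) = true}

/-- The tensor operation on families corresponding to a binary operation on `{0,1}`. -/
noncomputable def tensorFam {X : Type*} (op : Bool → Bool → Bool)
    (𝒜 ℬ : Set (Set X)) : Set (Set X) :=
  Set.image2 (setOp op) 𝒜 ℬ

/-- The convex shadow of `A` in `𝒜`. -/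
def convexShadow {X : Type*} (𝒜 : Set (Set X)) (A : Set X) : Set (Set X) :=
  {B | B ⊆ A ∧ Set.Icc B A ⊆ 𝒜}

/-- Domain of a relation. -/
def relDom {X Y : Type*} (R : Set (X × Y)) : Set X := {x | ∃ y, (x, y) ∈ R}

/-- Range of a relation. -/
def relRg {X Y : Type*} (R : Set (X × Y)) : Set Y := {y | ∃ x, (x, y) ∈ R}

/-- The family of (partial) functions from `X` to `Y`, as sets of pairs. -/
def partialFunFam (X Y : Type*) : Set (Set (X × Y)) :=
  {f | ∀ x y y', (x, y) ∈ f → (x, y') ∈ f → y = y'}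

/-- The family of relations on `X` with disjoint domain and range. -/
def exclFam (X : Type*) : Set (Set (X × X)) :=
  {R | relDom R ∩ relRg R = ∅}

/-- The family of relations on `X` whose domain is included in their range. -/
def inclFam (X : Type*) : Set (Set (X × X)) :=
  {R | relDom R ⊆ relRg R}

/-- The family of anonymous relations: every point of the domain has two distinct images. -/
def anonFam (X Y : Type*) : Set (Set (X × Y)) :=
  {R | ∀ x ∈ relDom R, ∃ y y' : Y, y ≠ y' ∧ (x, y) ∈ R ∧ (x, y') ∈ R}

/-- The family of rectangles `A × B`. -/
def rectFam (X Y : Type*) : Set (Set (X × Y)) :=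
  {P | ∃ (A : Set X) (B : Set Y), P = A ×ˢ B}

/-- General tensor disjunction of an indexed family of families of sets. -/
def gTensorDisj {ι X : Type*} (𝒜 : ι → Set (Set X)) : Set (Set X) :=
  {U | ∃ f : ι → Set X, (∀ i, f i ∈ 𝒜 i) ∧ U = ⋃ i, f i}

/-- The Kripke operator associated to a relation `ℛ ⊆ 𝒫(Y) × 𝒫(X)^n`. -/
def kripkeOp {X Y : Type*} {n : ℕ} (ℛ : Set (Set Y × (Fin n → Set X)))
    (𝒜 : Fin n → Set (Set X)) : Set (Set Y) :=
  {B | ∃ A : Fin n → Set X, (∀ i, A i ∈ 𝒜 i) ∧ (B, A) ∈ ℛ}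


section Aux

variable {X : Type*}

lemma relDom_prod {A B : Set X} (hB : B.Nonempty) : relDom (A ×ˢ B) = A := by
  ext x
  constructor
  · rintro ⟨y, hy⟩; exact hy.1
  · rintro hx; obtain ⟨y, hy⟩ := hB; exact ⟨y, hx, hy⟩

lemma subset_prod_mem_excl {A : Set X} {R : Set (X × X)} (hR : R ⊆ A ×ˢ Aᶜ) :
    R ∈ exclFam X := by
  rw [exclFam, mem_setOf_eq, eq_empty_iff_forall_notMem]
  rintro x ⟨⟨y, hy⟩, ⟨z, hz⟩⟩
  exact (hR hz).2 (hR hy).1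

lemma excl_subset_prod {R : Set (X × X)} (hR : R ∈ exclFam X) :
    R ⊆ relDom R ×ˢ (relDom R)ᶜ := by
  rintro ⟨x, y⟩ h
  refine ⟨⟨y, h⟩, fun hy => ?_⟩
  exact (eq_empty_iff_forall_notMem.mp hR y) ⟨hy, x, h⟩

lemma excl_maximal {A : Set X} (hA : A.Nonempty) (hA' : A ≠ univ) {R : Set (X × X)}
    (hR : R ∈ exclFam X) (hsub : A ×ˢ Aᶜ ⊆ R) : R = A ×ˢ Aᶜ := by
  obtain ⟨b, hb⟩ := nonempty_compl.mpr hA'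
  obtain ⟨a, ha⟩ := hA
  have hdom : relDom R = A := by
    apply Subset.antisymm
    · rintro x ⟨y, hy⟩
      by_contra hx
      exact (eq_empty_iff_forall_notMem.mp hR x) ⟨⟨y, hy⟩, a, hsub ⟨ha, hx⟩⟩
    · intro x hx
      exact ⟨b, hsub ⟨hx, hb⟩⟩
  refine Subset.antisymm ?_ hsub
  have h2 := excl_subset_prod hR
  rwa [hdom] at h2

/-- nonempty proper subsets -/
def properSets (X : Type*) : Set (Set X) := {A | A.Nonempty ∧ A ≠ univ}

/-- maximal elements of `exclFam X` -/
def maxExcl (X : Type*) : Set (Set (X × X)) := (fun A : Set X => A ×ˢ Aᶜ) '' properSets X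

lemma prod_compl_injOn : InjOn (fun A : Set X => A ×ˢ Aᶜ) (properSets X) := by
  rintro A ⟨hA, hA'⟩ B ⟨hB, hB'⟩ h
  have hAc := nonempty_compl.mpr hA'
  have hBc := nonempty_compl.mpr hB'
  have h2 : relDom (A ×ˢ Aᶜ) = relDom (B ×ˢ Bᶜ) := by simp only at h; rw [h]
  rwa [relDom_prod hAc, relDom_prod hBc] at h2

lemma encard_properSets [Fintype X] (hX : 2 ≤ Fintype.card X) :
    (properSets X).encard = ((2 ^ Fintype.card X - 2 : ℕ) : ℕ∞) := by
  have hXne : Nonempty X := Fintype.card_pos_iff.mp (by omega)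
  have hne : (∅ : Set X) ≠ univ := Ne.symm (Nonempty.ne_empty univ_nonempty)
  have hset : properSets X = ({∅, univ} : Set (Set X))ᶜ := by
    ext A
    simp only [properSets, mem_setOf_eq, nonempty_iff_ne_empty, mem_compl_iff, mem_insert_iff,
      mem_singleton_iff, not_or]
  have hpow : 2 ≤ 2 ^ Fintype.card X := by
    calc 2 = 2 ^ 1 := rfl
    _ ≤ 2 ^ Fintype.card X := Nat.pow_le_pow_right (by norm_num) (by omega)
  have h3 := encard_add_encard_compl ({∅, univ} : Set (Set X))
  rw [encard_pair hne, encard_univ, ENat.card_eq_coe_fintype_card, Fintype.card_set] at h3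
  have h4 : ((2 ^ Fintype.card X - 2 : ℕ) : ℕ∞) + 2 = ((2 ^ Fintype.card X : ℕ) : ℕ∞) := by
    rw [show ((2 : ℕ∞)) = ((2 : ℕ) : ℕ∞) by rfl, ← Nat.cast_add,
      Nat.sub_add_cancel hpow]
  rw [hset, ← (show ∀ x y : ℕ∞, x + 2 = y + 2 ↔ x = y from fun x y => WithTop.add_right_inj (show (2 : ℕ∞) ≠ ⊤ by norm_num)), h4, ← h3, add_comm]

lemma encard_maxExcl [Fintype X] (hX : 2 ≤ Fintype.card X) :
    (maxExcl X).encard = ((2 ^ Fintype.card X - 2 : ℕ) : ℕ∞) := by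
  rw [maxExcl, prod_compl_injOn.encard_image, encard_properSets hX]

lemma maxExcl_subset : maxExcl X ⊆ exclFam X := by
  rintro G ⟨A, _, rfl⟩
  exact subset_prod_mem_excl (Subset.refl _)

lemma excl_cover [Fintype X] (hX : 2 ≤ Fintype.card X) {R : Set (X × X)}
    (hR : R ∈ exclFam X) : ∃ G ∈ maxExcl X, R ⊆ G := by
  rcases eq_empty_or_nonempty R with h | h
  · have hXne : Nonempty X := Fintype.card_pos_iff.mp (by omega)
    obtain ⟨a⟩ := hXne
    have hA' : ({a} : Set X) ≠ univ := by
      obtain ⟨b, hb⟩ := Fintype.exists_ne_of_one_lt_card (by omega) a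
      intro hc
      exact hb (by have : b ∈ ({a} : Set X) := hc ▸ mem_univ b; simpa using this)
    exact ⟨{a} ×ˢ {a}ᶜ, ⟨{a}, ⟨singleton_nonempty a, hA'⟩, rfl⟩, by simp [h]⟩
  · obtain ⟨⟨x, y⟩, hxy⟩ := h
    refine ⟨relDom R ×ˢ (relDom R)ᶜ, ⟨relDom R, ⟨⟨x, y, hxy⟩, ?_⟩, rfl⟩, excl_subset_prod hR⟩
    intro hc
    refine (eq_empty_iff_forall_notMem.mp hR y) ⟨?_, x, hxy⟩
    rw [hc]; exact mem_univ y

lemma maxExcl_max {G : Set (X × X)} (hG : G ∈ maxExcl X) {R : Set (X × X)}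
    (hR : R ∈ exclFam X) (hGR : G ⊆ R) : R = G := by
  obtain ⟨A, ⟨hA, hA'⟩, rfl⟩ := hG
  exact excl_maximal hA hA' hR hGR

lemma empty_mem_excl : (∅ : Set (X × X)) ∈ exclFam X := by
  rw [exclFam, mem_setOf_eq, eq_empty_iff_forall_notMem]
  rintro x ⟨⟨y, hy⟩, -⟩
  exact hy

lemma sUnion_Iic' (G : Set (X × X)) : ⋃₀ (Set.Iic G) = G :=
  Subset.antisymm (sUnion_subset fun _ hs => hs) (subset_sUnion_of_mem (mem_Iic.mpr subset_rfl))

lemma biUnion_Iic_maxExcl [Fintype X] (hX : 2 ≤ Fintype.card X) :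
    (⋃ G ∈ maxExcl X, Set.Iic G) = exclFam X := by
  ext R
  simp only [mem_iUnion, mem_Iic, exists_prop]
  constructor
  · rintro ⟨G, hG, hRG⟩
    obtain ⟨A, -, rfl⟩ := hG
    exact subset_prod_mem_excl hRG
  · exact fun hR => excl_cover hX hR

end Aux

theorem stmt12 {X : Type*} [Fintype X] (hX : 2 ≤ Fintype.card X) :
    upperDim (exclFam X) = ((2 ^ Fintype.card X - 2 : ℕ) : ℕ∞) ∧
    cylDim (exclFam X) = ((2 ^ Fintype.card X - 2 : ℕ) : ℕ∞) ∧
    dualDim (exclFam X) = 1 := by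
  have hMcard := encard_maxExcl (X := X) hX
  refine ⟨?_, ?_, ?_⟩
  · apply le_antisymm
    · apply sInf_le
      refine ⟨maxExcl X, ⟨maxExcl_subset, Set.Iic, fun G hG => ⟨?_, ?_, ?_, sUnion_Iic' G⟩,
        biUnion_Iic_maxExcl hX⟩, hMcard⟩
      · obtain ⟨A, -, rfl⟩ := hG
        exact fun R hR => subset_prod_mem_excl hR
      · exact fun S _ T hT C _ hCT => hCT.trans hT
      · rw [IsDominatedFam, sUnion_Iic' G]; exact mem_Iic.mpr subset_rfl
    · apply le_sInf
      rintro n ⟨𝒢, ⟨h𝒢sub, 𝒟, h𝒟, h𝒟U⟩, rfl⟩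
      rw [← hMcard]
      apply encard_mono
      intro G₀ hG₀
      have hmem : G₀ ∈ exclFam X := maxExcl_subset hG₀
      rw [← h𝒟U] at hmem
      simp only [mem_iUnion, exists_prop] at hmem
      obtain ⟨G, hG, hG₀G⟩ := hmem
      obtain ⟨-, -, hdom, hUeq⟩ := h𝒟 G hG
      have hsub : G₀ ⊆ G := hUeq ▸ subset_sUnion_of_mem hG₀G
      have : G = G₀ := maxExcl_max hG₀ (h𝒢sub hG) hsub
      rwa [← this]
  · apply le_antisymm
    · apply sInf_le
      refine ⟨(fun G => Set.Icc ∅ G) '' maxExcl X, ⟨?_, ?_, ?_⟩⟩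
      · rintro J ⟨G, -, rfl⟩
        exact ⟨∅, G, empty_subset G, rfl⟩
      · rw [sUnion_image, ← biUnion_Iic_maxExcl hX]
        refine iUnion₂_congr fun G _ => ?_
        simp [Set.Icc, Set.Iic]
      · rw [InjOn.encard_image, hMcard]
        rintro G₀ hG₀ G₁ hG₁ h
        simp only at h
        have h0 : G₀ ∈ Set.Icc (∅ : Set (X × X)) G₁ := by
          rw [← h]; exact ⟨empty_subset _, subset_rfl⟩
        have h1 : G₁ ∈ Set.Icc (∅ : Set (X × X)) G₀ := by
          rw [h]; exact ⟨empty_subset _, subset_rfl⟩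
        exact Subset.antisymm h0.2 h1.2
    · apply le_sInf
      rintro n ⟨𝕀, h𝕀int, h𝕀U, rfl⟩
      rw [← hMcard]
      have hkey : ∀ G₀, ∃ J, G₀ ∈ maxExcl X → J ∈ 𝕀 ∧ G₀ ∈ J ∧ ∀ R ∈ J, R ⊆ G₀ := by
        intro G₀
        by_cases h : G₀ ∈ maxExcl X
        · have hmem : G₀ ∈ ⋃₀ 𝕀 := h𝕀U ▸ maxExcl_subset h
          obtain ⟨J, hJ, hGJ⟩ := hmem
          obtain ⟨A, B, hAB, rfl⟩ := h𝕀int J hJ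
          have hBexcl : B ∈ exclFam X := by
            rw [← h𝕀U]
            exact ⟨Set.Icc A B, hJ, hAB, subset_rfl⟩
          have hBG : B = G₀ := maxExcl_max h hBexcl hGJ.2
          exact ⟨Set.Icc A B, fun _ => ⟨hJ, hGJ, fun R hR => hBG ▸ hR.2⟩⟩
        · exact ⟨∅, fun h' => absurd h' h⟩
      choose f hf using hkey
      apply encard_le_encard_of_injOn (f := f)
      · exact fun G₀ hG₀ => (hf G₀ hG₀).1
      · intro G₀ hG₀ G₁ hG₁ h
        obtain ⟨-, hmem₀, hub₀⟩ := hf G₀ hG₀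
        obtain ⟨-, hmem₁, hub₁⟩ := hf G₁ hG₁
        exact Subset.antisymm (hub₁ G₀ (h ▸ hmem₀)) (hub₀ G₁ (h.symm ▸ hmem₁))
  · apply le_antisymm
    · apply sInf_le
      refine ⟨{∅}, ⟨?_, fun _ => exclFam X, fun K hK => ⟨subset_rfl, ?_, ⟨?_, ?_⟩, ?_⟩, ?_⟩,
        encard_singleton ∅⟩
      · simp only [singleton_subset_iff]; exact empty_mem_excl
      · intro S _ T hT C _ hCT
        exact subset_prod_mem_excl (hCT.trans (excl_subset_prod hT))
      · exact ⟨∅, empty_mem_excl⟩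
      · have : ⋂₀ exclFam X = (∅ : Set (X × X)) :=
          Subset.antisymm (sInter_subset_of_mem empty_mem_excl) (empty_subset _)
        rw [this]; exact empty_mem_excl
      · rw [mem_singleton_iff] at hK
        rw [hK]
        exact Subset.antisymm (sInter_subset_of_mem empty_mem_excl) (empty_subset _)
      · simp
    · apply le_sInf
      rintro n ⟨𝒦, ⟨-, 𝒮, -, hU⟩, rfl⟩
      rw [ENat.one_le_iff_ne_zero, Ne, encard_eq_zero]
      rintro rfl
      simp only [mem_empty_iff_false, iUnion_of_empty, iUnion_empty] at hU
      exact (hU ▸ empty_mem_excl : (∅ : Set (X × X)) ∈ (∅ : Set (Set (X × X))))
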